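/- Fix λ ≠ 0. Let Ω ⊂ ℝ^d be nonempty open convex and let φ : Ω → ℝ be smooth with 1 − λ ∇φ(ϑ)·ϑ > 0 for all ϑ ∈ Ω. Suppose the map τ(ϑ) = ϑ·e^{−λ φ(ϑ)} is injective on Ω. Then τ is a diffeomorphism from Ω onto its range: at every ϑ ∈ Ω its Jacobian matrix ∂τ/∂ϑ = e^{−λφ(ϑ)}·(I_d − λ ϑ (∇φ(ϑ))ᵀ) is invertible, with inverse e^{λφ(ϑ)}·(I_d + λ ϑ (∇φ(ϑ))ᵀ/(1 − λ∇φ(ϑ)·ϑ)), the range τ(Ω) is open, and τ⁻¹ is smooth. -/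

import Mathlib

open MeasureTheory Real
open scoped RealInnerProductSpace ENNReal BigOperators

noncomputable section


private lemma pc_aux_left {d : ℕ} (lam c : ℝ) (g ϑ : EuclideanSpace ℝ (Fin d))
    (hD : (1:ℝ) - lam * ⟪g, ϑ⟫ ≠ 0) (w : EuclideanSpace ℝ (Fin d)) :
    Real.exp (lam * c) •
      (Real.exp (-lam * c) • (w - (lam * ⟪g, w⟫) • ϑ)
        + (lam * ⟪g, Real.exp (-lam * c) • (w - (lam * ⟪g, w⟫) • ϑ)⟫ / (1 - lam * ⟪g, ϑ⟫)) • ϑ)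
      = w := by
  rw [inner_smul_right, inner_sub_right, real_inner_smul_right]
  rw [show -lam * c = -(lam * c) by ring, Real.exp_neg]
  have hne' : Real.exp (lam * c) ≠ 0 := Real.exp_ne_zero _
  generalize ⟪g, w⟫ = s
  generalize ht : ⟪g, ϑ⟫ = t at hD ⊢
  match_scalars
  · field_simp [hD]
  · field_simp [hD]
    ring

private lemma pc_aux_right {d : ℕ} (lam c : ℝ) (g ϑ : EuclideanSpace ℝ (Fin d))
    (hD : (1:ℝ) - lam * ⟪g, ϑ⟫ ≠ 0) (w : EuclideanSpace ℝ (Fin d)) :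
    Real.exp (-lam * c) •
      (Real.exp (lam * c) • (w + (lam * ⟪g, w⟫ / (1 - lam * ⟪g, ϑ⟫)) • ϑ)
        - (lam * ⟪g, Real.exp (lam * c) • (w + (lam * ⟪g, w⟫ / (1 - lam * ⟪g, ϑ⟫)) • ϑ)⟫) • ϑ)
      = w := by
  rw [inner_smul_right, inner_add_right, real_inner_smul_right]
  rw [show -lam * c = -(lam * c) by ring, Real.exp_neg]
  have hne' : Real.exp (lam * c) ≠ 0 := Real.exp_ne_zero _
  generalize ⟪g, w⟫ = s
  generalize ht : ⟪g, ϑ⟫ = t at hD ⊢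
  match_scalars
  · field_simp [hD]
  · field_simp [hD]
    ring

private lemma pc_aux_BA {d : ℕ} (lam c : ℝ) (g x : EuclideanSpace ℝ (Fin d))
    (hD : (1:ℝ) - lam * ⟪g, x⟫ ≠ 0) (w : EuclideanSpace ℝ (Fin d)) :
    Real.exp (lam * c) •
      (Real.exp (-(lam * c)) • (w - (lam * ⟪g, w⟫) • x)
        + (lam / (1 - lam * ⟪g, x⟫) * ⟪g, Real.exp (-(lam * c)) • (w - (lam * ⟪g, w⟫) • x)⟫) • x)
      = w := by
  rw [inner_smul_right, inner_sub_right, real_inner_smul_right, Real.exp_neg]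
  have hne' : Real.exp (lam * c) ≠ 0 := Real.exp_ne_zero _
  generalize ⟪g, w⟫ = s
  generalize ht : ⟪g, x⟫ = t at hD ⊢
  match_scalars
  · field_simp [hD]
  · field_simp [hD]
    ring

private lemma pc_aux_AB {d : ℕ} (lam c : ℝ) (g x : EuclideanSpace ℝ (Fin d))
    (hD : (1:ℝ) - lam * ⟪g, x⟫ ≠ 0) (w : EuclideanSpace ℝ (Fin d)) :
    Real.exp (-(lam * c)) •
      (Real.exp (lam * c) • (w + (lam / (1 - lam * ⟪g, x⟫) * ⟪g, w⟫) • x)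
        - (lam * ⟪g, Real.exp (lam * c) • (w + (lam / (1 - lam * ⟪g, x⟫) * ⟪g, w⟫) • x)⟫) • x)
      = w := by
  rw [inner_smul_right, inner_add_right, real_inner_smul_right, Real.exp_neg]
  have hne' : Real.exp (lam * c) ≠ 0 := Real.exp_ne_zero _
  generalize ⟪g, w⟫ = s
  generalize ht : ⟪g, x⟫ = t at hD ⊢
  match_scalars
  · field_simp [hD]
  · field_simp [hD]
    ring

/-- Let `λ ≠ 0`, `Ω` nonempty open convex, `φ` smooth on `Ω` with
`1 − λ∇φ(ϑ)·ϑ > 0`, and suppose `τ(ϑ) = ϑ·e^{−λφ(ϑ)}` is injective on `Ω`. Then `τ` is a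
diffeomorphism onto its range: at every `ϑ ∈ Ω` its Jacobian is
`w ↦ e^{−λφ(ϑ)}(w − λ⟪∇φ(ϑ), w⟫ ϑ)`, which is invertible with inverse
`w ↦ e^{λφ(ϑ)}(w + λ⟪∇φ(ϑ), w⟫/(1 − λ∇φ(ϑ)·ϑ) · ϑ)`; the range `τ(Ω)` is open and the
inverse map is smooth. -/
theorem parameterChange_diffeomorphism {d : ℕ} (lam : ℝ) (hlam : lam ≠ 0)
    (Ω : Set (EuclideanSpace ℝ (Fin d)))
    (hne : Ω.Nonempty) (hop : IsOpen Ω) (hconv : Convex ℝ Ω)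
    (φ : EuclideanSpace ℝ (Fin d) → ℝ) (hφ : ContDiffOn ℝ (⊤ : ℕ∞) φ Ω)
    (hpos : ∀ ϑ ∈ Ω, 0 < 1 - lam * ⟪gradient φ ϑ, ϑ⟫)
    (τ : EuclideanSpace ℝ (Fin d) → EuclideanSpace ℝ (Fin d))
    (hτ : ∀ ϑ, τ ϑ = Real.exp (-lam * φ ϑ) • ϑ)
    (hinj : Set.InjOn τ Ω) :
    (∀ ϑ ∈ Ω,
      (∀ w : EuclideanSpace ℝ (Fin d),
        fderiv ℝ τ ϑ w = Real.exp (-lam * φ ϑ) • (w - (lam * ⟪gradient φ ϑ, w⟫) • ϑ)) ∧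
      (∀ w : EuclideanSpace ℝ (Fin d),
        Real.exp (lam * φ ϑ) •
            (fderiv ℝ τ ϑ w
              + (lam * ⟪gradient φ ϑ, fderiv ℝ τ ϑ w⟫ / (1 - lam * ⟪gradient φ ϑ, ϑ⟫)) • ϑ)
          = w) ∧
      (∀ w : EuclideanSpace ℝ (Fin d),
        fderiv ℝ τ ϑ (Real.exp (lam * φ ϑ) •
            (w + (lam * ⟪gradient φ ϑ, w⟫ / (1 - lam * ⟪gradient φ ϑ, ϑ⟫)) • ϑ))
          = w)) ∧
    IsOpen (τ '' Ω) ∧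
    ∃ g : EuclideanSpace ℝ (Fin d) → EuclideanSpace ℝ (Fin d),
      ContDiffOn ℝ (⊤ : ℕ∞) g (τ '' Ω) ∧ Set.InvOn g τ Ω (τ '' Ω) := by
  have hτf : τ = fun x => Real.exp (-lam * φ x) • x := funext hτ
  -- the derivative of `τ` at points of `Ω`, as a continuous linear map
  have hfds : ∀ ϑ ∈ Ω, HasFDerivAt τ (Real.exp (-lam * φ ϑ) •
      (ContinuousLinearMap.id ℝ (EuclideanSpace ℝ (Fin d))
        - lam • ((innerSL ℝ (gradient φ ϑ)).smulRight ϑ))) ϑ := by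
    intro ϑ hϑ
    have hφd : DifferentiableAt ℝ φ ϑ :=
      (hφ.contDiffAt (hop.mem_nhds hϑ)).differentiableAt (by simp)
    have hg := hasGradientAt_iff_hasFDerivAt.mp hφd.hasGradientAt
    have h1 : HasFDerivAt (fun x => Real.exp (-lam * φ x))
        (Real.exp (-lam * φ ϑ) • ((-lam) • (InnerProductSpace.toDual ℝ _ (gradient φ ϑ) :
          EuclideanSpace ℝ (Fin d) →L[ℝ] ℝ))) ϑ := by
      simpa [neg_mul] using (hg.const_mul (-lam)).exp
    have h2 := h1.smul (hasFDerivAt_id ϑ)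
    rw [hτf]
    refine h2.congr_fderiv ?_
    ext w
    simp [ContinuousLinearMap.smul_apply, ContinuousLinearMap.smulRight_apply,
      InnerProductSpace.toDual_apply_apply, smul_sub, smul_smul]
    module
  have hApply : ∀ ϑ ∈ Ω, ∀ w : EuclideanSpace ℝ (Fin d),
      fderiv ℝ τ ϑ w = Real.exp (-lam * φ ϑ) • (w - (lam * ⟪gradient φ ϑ, w⟫) • ϑ) := by
    intro ϑ hϑ w
    rw [(hfds ϑ hϑ).fderiv]
    simp [ContinuousLinearMap.smul_apply, ContinuousLinearMap.smulRight_apply, smul_smul]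
  -- smoothness of `τ` at points of `Ω`
  have hτc : ∀ x ∈ Ω, ContDiffAt ℝ (⊤ : ℕ∞) τ x := by
    intro x hx
    rw [hτf]
    have hφc : ContDiffAt ℝ (⊤ : ℕ∞) φ x := hφ.contDiffAt (hop.mem_nhds hx)
    exact ((contDiffAt_const (c := -lam)).mul hφc).exp.smul contDiffAt_id
  have hn1 : ((⊤ : ℕ∞) : WithTop ℕ∞) ≠ 0 := by simp
  -- the derivative as a continuous linear equivalence
  have hequiv : ∀ x ∈ Ω, ∃ e : EuclideanSpace ℝ (Fin d) ≃L[ℝ] EuclideanSpace ℝ (Fin d),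
      (e : EuclideanSpace ℝ (Fin d) →L[ℝ] EuclideanSpace ℝ (Fin d))
        = Real.exp (-lam * φ x) • (ContinuousLinearMap.id ℝ (EuclideanSpace ℝ (Fin d))
          - lam • ((innerSL ℝ (gradient φ x)).smulRight x)) := by
    intro x hx
    have hD : (1:ℝ) - lam * ⟪gradient φ x, x⟫ ≠ 0 := ne_of_gt (hpos x hx)
    have hne' : Real.exp (lam * φ x) ≠ 0 := Real.exp_ne_zero _
    set A : EuclideanSpace ℝ (Fin d) →L[ℝ] EuclideanSpace ℝ (Fin d) :=
      Real.exp (-lam * φ x) • (ContinuousLinearMap.id ℝ (EuclideanSpace ℝ (Fin d))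
        - lam • ((innerSL ℝ (gradient φ x)).smulRight x)) with hA
    set B : EuclideanSpace ℝ (Fin d) →L[ℝ] EuclideanSpace ℝ (Fin d) :=
      Real.exp (lam * φ x) • (ContinuousLinearMap.id ℝ (EuclideanSpace ℝ (Fin d))
        + (lam / (1 - lam * ⟪gradient φ x, x⟫)) • ((innerSL ℝ (gradient φ x)).smulRight x)) with hB
    have hAw : ∀ w, A w = Real.exp (-(lam * φ x)) • (w - (lam * ⟪gradient φ x, w⟫) • x) := by
      intro w
      simp [hA, ContinuousLinearMap.smul_apply, ContinuousLinearMap.smulRight_apply, smul_smul,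
        neg_mul]
    have hBw : ∀ w, B w = Real.exp (lam * φ x) •
        (w + (lam / (1 - lam * ⟪gradient φ x, x⟫) * ⟪gradient φ x, w⟫) • x) := by
      intro w
      simp [hB, ContinuousLinearMap.smul_apply, ContinuousLinearMap.smulRight_apply, smul_smul,
        mul_assoc]
    have hBA : Function.LeftInverse B A := by
      intro w
      rw [hAw w, hBw]
      exact pc_aux_BA lam (φ x) (gradient φ x) x hD w
    have hAB : Function.RightInverse B A := by
      intro w
      rw [hBw w, hAw]
      exact pc_aux_AB lam (φ x) (gradient φ x) x hD w
    exact ⟨ContinuousLinearEquiv.equivOfInverse A B hBA hAB, rfl⟩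
  have hstricts : ∀ x ∈ Ω, ∃ e : EuclideanSpace ℝ (Fin d) ≃L[ℝ] EuclideanSpace ℝ (Fin d),
      HasFDerivAt τ (e : EuclideanSpace ℝ (Fin d) →L[ℝ] EuclideanSpace ℝ (Fin d)) x := by
    intro x hx
    obtain ⟨e, he⟩ := hequiv x hx
    exact ⟨e, he ▸ hfds x hx⟩
  -- openness of the image
  have hO : IsOpen (τ '' Ω) := by
    rw [isOpen_iff_mem_nhds]
    rintro y ⟨x, hx, rfl⟩
    obtain ⟨e, he⟩ := hstricts x hx
    have hstrict := (hτc x hx).hasStrictFDerivAt' he hn1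
    rw [← hstrict.map_nhds_eq_of_equiv, Filter.mem_map]
    exact Filter.mem_of_superset (hop.mem_nhds hx) (Set.subset_preimage_image τ Ω)
  refine ⟨?_, hO, Function.invFunOn τ Ω, ?_, hinj.leftInvOn_invFunOn, fun y hy =>
    Function.invFunOn_eq (by rcases hy with ⟨a, ha, rfl⟩; exact ⟨a, ha, rfl⟩)⟩
  · -- pointwise Jacobian statements
    intro ϑ hϑ
    have hD : (1:ℝ) - lam * ⟪gradient φ ϑ, ϑ⟫ ≠ 0 := ne_of_gt (hpos ϑ hϑ)
    have hne' : Real.exp (lam * φ ϑ) ≠ 0 := Real.exp_ne_zero _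
    have hApp := hApply ϑ hϑ
    clear hfds hApply hτc hequiv hstricts hO hτf hτ hφ hinj hconv hne hpos hϑ
    refine ⟨hApp, ?_, ?_⟩
    · intro w
      rw [hApp w]
      exact pc_aux_left lam (φ ϑ) (gradient φ ϑ) ϑ hD w
    · intro w
      rw [hApp _]
      exact pc_aux_right lam (φ ϑ) (gradient φ ϑ) ϑ hD w
  · -- smoothness of the inverse
    rintro y ⟨x, hx, rfl⟩
    obtain ⟨e, he⟩ := hstricts x hx
    have hca := hτc x hx
    have hli : ContDiffAt ℝ (⊤ : ℕ∞) (hca.localInverse he hn1) (τ x) :=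
      hca.to_localInverse he hn1
    have hstrict := hca.hasStrictFDerivAt' he hn1
    have himg : hca.localInverse he hn1 (τ x) = x := hca.localInverse_apply_image he hn1
    have ev1 : ∀ᶠ y' in nhds (τ x), τ (hca.localInverse he hn1 y') = y' :=
      hstrict.eventually_right_inverse
    have ev2 : ∀ᶠ y' in nhds (τ x), hca.localInverse he hn1 y' ∈ Ω :=
      hli.continuousAt.eventually_mem (by rw [himg]; exact hop.mem_nhds hx)
    have ev3 : ∀ᶠ y' in nhds (τ x), y' ∈ τ '' Ω := hO.eventually_mem ⟨x, hx, rfl⟩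
    have heq : Function.invFunOn τ Ω =ᶠ[nhds (τ x)] hca.localInverse he hn1 := by
      filter_upwards [ev1, ev2, ev3] with y' h1 h2 h3
      have hmem : Function.invFunOn τ Ω y' ∈ Ω := Function.invFunOn_mem
        (by rcases h3 with ⟨a, ha, rfl⟩; exact ⟨a, ha, rfl⟩)
      have hval : τ (Function.invFunOn τ Ω y') = y' := Function.invFunOn_eq
        (by rcases h3 with ⟨a, ha, rfl⟩; exact ⟨a, ha, rfl⟩)
      exact hinj hmem h2 (by rw [hval, h1])
    exact (hli.congr_of_eventuallyEq heq).contDiffWithinAt
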